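/- There exists a unique α₀ ∈ (0, 2π/3) such that the function f(α) = 3α/2 − π − sin(α/2) + 2·sin(α) satisfies f(α) < 0 for all α ∈ [0, α₀), f(α₀) = 0, and f(α) > 0 for all α ∈ (α₀, π). -/

import Mathlib

open Real

noncomputable def Fn : ℝ → ℝ := fun α => 3 * α / 2 - π - Real.sin (α / 2) + 2 * Real.sin α

lemma Fn_hasDeriv (x : ℝ) :
    HasDerivAt Fn (3 / 2 - (1/2) * Real.cos (x / 2) + 2 * Real.cos x) x := by
  have h1 : HasDerivAt (fun α : ℝ => 3 * α / 2) (3/2) x := by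
    simpa using ((hasDerivAt_id x).const_mul (3:ℝ)).div_const 2
  have h2 : HasDerivAt (fun α : ℝ => Real.sin (α / 2)) (Real.cos (x/2) * (1/2)) x := by
    have := (Real.hasDerivAt_sin (x/2)).comp x ((hasDerivAt_id x).div_const 2)
    simpa [Function.comp_def] using this
  have h3 : HasDerivAt (fun α : ℝ => 2 * Real.sin α) (2 * Real.cos x) x :=
    (Real.hasDerivAt_sin x).const_mul 2
  have h := ((h1.sub_const π).sub h2).add h3
  refine h.congr_deriv ?_
  ring

lemma Gn_hasDeriv (x : ℝ) :
    HasDerivAt (fun x : ℝ => 3 / 2 - (1/2) * Real.cos (x / 2) + 2 * Real.cos x)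
      ((1/4) * Real.sin (x/2) - 2 * Real.sin x) x := by
  have h2 : HasDerivAt (fun α : ℝ => Real.cos (α / 2)) (-Real.sin (x/2) * (1/2)) x := by
    have := (Real.hasDerivAt_cos (x/2)).comp x ((hasDerivAt_id x).div_const 2)
    simpa [Function.comp_def] using this
  have h3 : HasDerivAt (fun α : ℝ => 2 * Real.cos α) (2 * -Real.sin x) x :=
    (Real.hasDerivAt_cos x).const_mul 2
  have h := ((hasDerivAt_const x (3/2 : ℝ)).sub (h2.const_mul (1/2 : ℝ))).add h3
  refine h.congr_deriv ?_
  ring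

lemma cos_fourteen_tenths : (1:ℝ)/16 < Real.cos (7/5) := by
  have hs35 : Real.sin (7/20) ≤ 7/20 := le_of_lt (Real.sin_lt (by norm_num))
  have hc35 : Real.cos (7/20) ≤ 1 := Real.cos_le_one _
  have hbound := Real.cos_bound (x := 7/20) (by rw [abs_of_nonneg] <;> norm_num)
  rw [abs_of_nonneg (by norm_num : (0:ℝ) ≤ 7/20)] at hbound
  have hc35' : Real.cos (7/20) ≤ 1 - (7/20)^2/2 + (7/20)^4 * (5/96) := by
    have := abs_le.1 hbound
    linarith [this.2]
  have hs7 : Real.sin (7/10) ≤ 329/500 := by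
    have h2 : Real.sin (7/10) = 2 * Real.sin (7/20) * Real.cos (7/20) := by
      rw [← Real.sin_two_mul]; norm_num
    have hcpos : 0 ≤ Real.cos (7/20) := by
      apply Real.cos_nonneg_of_mem_Icc
      constructor <;> nlinarith [Real.pi_gt_d6]
    have hspos : 0 ≤ Real.sin (7/20) :=
      Real.sin_nonneg_of_nonneg_of_le_pi (by norm_num) (by nlinarith [Real.pi_gt_d6])
    nlinarith
  have hs7pos : 0 ≤ Real.sin (7/10) :=
    Real.sin_nonneg_of_nonneg_of_le_pi (by norm_num) (by nlinarith [Real.pi_gt_d6])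
  have h14 : Real.cos (7/5) = 2 * Real.cos (7/10) ^ 2 - 1 := by
    have := Real.cos_two_mul (7/10); rw [← this]; norm_num
  have hpy := Real.sin_sq_add_cos_sq (7/10)
  nlinarith

lemma Fn_concave : StrictConcaveOn ℝ (Set.Icc (0:ℝ) (14/5)) Fn := by
  have hderiv : deriv Fn = fun x : ℝ => 3 / 2 - (1/2) * Real.cos (x / 2) + 2 * Real.cos x := by
    funext x; exact (Fn_hasDeriv x).deriv
  apply strictConcaveOn_of_deriv2_neg (convex_Icc _ _)
  · apply Continuous.continuousOn; unfold Fn; fun_prop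
  · intro x hx
    rw [interior_Icc] at hx
    have h2 : deriv^[2] Fn x = (1/4) * Real.sin (x/2) - 2 * Real.sin x := by
      rw [Function.iterate_succ, Function.iterate_one, Function.comp_apply, hderiv]
      exact (Gn_hasDeriv x).deriv
    rw [h2]
    have hxx : Real.sin x = 2 * Real.sin (x/2) * Real.cos (x/2) := by
      rw [← Real.sin_two_mul]; ring_nf
    have hpi := Real.pi_gt_d6
    have hs : 0 < Real.sin (x/2) :=
      Real.sin_pos_of_pos_of_lt_pi (by linarith [hx.1]) (by linarith [hx.2])
    have hc : 1/16 < Real.cos (x/2) := by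
      calc (1:ℝ)/16 < Real.cos (7/5) := cos_fourteen_tenths
        _ ≤ Real.cos (x/2) := by
            apply Real.cos_le_cos_of_nonneg_of_le_pi (by linarith [hx.1]) (by linarith) (by linarith [hx.2])
    nlinarith

lemma Fn_crude {x : ℝ} (h1 : 14/5 ≤ x) (h2 : x ≤ π) : 0 < Fn x := by
  have hs1 : Real.sin (x/2) ≤ 1 := Real.sin_le_one _
  have hs2 : 0 ≤ Real.sin x := Real.sin_nonneg_of_nonneg_of_le_pi (by linarith) h2
  have hpi := Real.pi_lt_d6
  unfold Fn; nlinarith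

lemma Fn_at_b : 0 < Fn (2 * π / 3) := by
  unfold Fn
  have h1 : (2 * π / 3) / 2 = π / 3 := by ring
  have h2 : 2 * π / 3 = π - π / 3 := by ring
  rw [h1, h2, Real.sin_pi_sub, Real.sin_pi_div_three]
  have := Real.sqrt_pos.2 (by norm_num : (0:ℝ) < 3)
  nlinarith [Real.pi_pos]

lemma Fn_mid {x y z : ℝ} (hx : x ∈ Set.Icc (0:ℝ) (14/5)) (hz : z ∈ Set.Icc (0:ℝ) (14/5))
    (hxy : x < y) (hyz : y < z) (hfx : 0 ≤ Fn x) (hfz : 0 < Fn z) : 0 < Fn y := by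
  have hxz : x < z := hxy.trans hyz
  set t := (z - y)/(z - x) with ht
  have ht0 : 0 < t := div_pos (by linarith) (by linarith)
  have ht1 : 0 < 1 - t := by
    have : t < 1 := (div_lt_one (by linarith)).2 (by linarith)
    linarith
  have hne : z - x ≠ 0 := by intro h; linarith [sub_eq_zero.1 h]
  have hcomb : t • x + (1-t) • z = y := by
    simp only [smul_eq_mul, ht]
    field_simp
    ring
  have hlt := Fn_concave.2 hx hz (ne_of_lt hxz) ht0 ht1 (by ring)
  rw [hcomb] at hlt
  simp only [smul_eq_mul] at hlt
  nlinarith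

lemma Fn_main : ∃! α₀ : ℝ, α₀ ∈ Set.Ioo 0 (2 * π / 3) ∧
    (∀ α ∈ Set.Ico (0:ℝ) α₀, Fn α < 0) ∧ (Fn α₀ = 0) ∧
    (∀ α ∈ Set.Ioo α₀ π, Fn α > 0) := by
  have hpi := Real.pi_gt_d6
  have hpi' := Real.pi_lt_d6
  have hb1 : 2 * π / 3 < 14/5 := by linarith
  have hbpi : (14:ℝ)/5 < π := by linarith
  have hF0 : Fn 0 < 0 := by unfold Fn; simp; linarith
  have hcont : Continuous Fn := by unfold Fn; fun_prop
  have hivt := intermediate_value_Ioo (a := (0:ℝ)) (b := 2*π/3) (by linarith)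
    hcont.continuousOn
  obtain ⟨α₀, hmem, hzero⟩ := hivt (Set.mem_Ioo.2 ⟨hF0, Fn_at_b⟩)
  have h01 : 0 < α₀ := hmem.1
  have h02 : α₀ < 2 * π / 3 := hmem.2
  have hprop1 : ∀ α ∈ Set.Ico (0:ℝ) α₀, Fn α < 0 := by
    intro α hα
    by_contra hcon
    push_neg at hcon
    have := Fn_mid (x := α) (z := 2*π/3)
      ⟨hα.1, by linarith [hα.2]⟩ ⟨by linarith, by linarith⟩ hα.2 h02 hcon Fn_at_b
    rw [hzero] at this; exact lt_irrefl 0 this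
  have hprop3 : ∀ α ∈ Set.Ioo α₀ π, Fn α > 0 := by
    intro α hα
    rcases lt_or_ge α (14/5) with hcase | hcase
    · exact Fn_mid (x := α₀) (z := 14/5)
        ⟨le_of_lt h01, by linarith⟩ ⟨by norm_num, le_refl _⟩ hα.1 hcase
        (le_of_eq hzero.symm) (Fn_crude (le_refl _) (le_of_lt hbpi))
    · exact Fn_crude hcase (le_of_lt hα.2)
  refine ⟨α₀, ⟨hmem, hprop1, hzero, hprop3⟩, ?_⟩
  rintro β ⟨hβmem, hβ1, hβ2, hβ3⟩
  rcases lt_trichotomy β α₀ with h | h | h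
  · exfalso
    have := hβ3 α₀ ⟨h, by linarith⟩
    rw [hzero] at this; exact lt_irrefl 0 this
  · exact h
  · exfalso
    have := hβ1 α₀ ⟨le_of_lt h01, h⟩
    rw [hzero] at this; exact lt_irrefl 0 this

theorem stmt0 :
    ∃! α₀ : ℝ, α₀ ∈ Set.Ioo 0 (2 * π / 3) ∧
      (∀ α ∈ Set.Ico (0:ℝ) α₀, 3 * α / 2 - π - sin (α / 2) + 2 * sin α < 0) ∧
      (3 * α₀ / 2 - π - sin (α₀ / 2) + 2 * sin α₀ = 0) ∧
      (∀ α ∈ Set.Ioo α₀ π, 3 * α / 2 - π - sin (α / 2) + 2 * sin α > 0) := by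
  have := Fn_main
  simp only [Fn] at this
  exact this
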